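/- With w_1,...,w_M ~ Dirichlet(1,...,1) and W̃ sampled (conditionally on the w_i) with probability π_i = φ w_i + (1-φ)/M of taking value w_i, the unconditional expectation satisfies E[M·W̃ - 1] = φ(M-1)/(M+1). -/

import Mathlib

open MeasureTheory
open scoped ENNReal

/-- The standard closed simplex-domain in `Fin n → ℝ`. -/
def sx (n : ℕ) : Set (Fin n → ℝ) := {x | (∀ i, 0 ≤ x i) ∧ ∑ i, x i ≤ 1}

lemma sx_isClosed (n : ℕ) : IsClosed (sx n) := by
  have h1 : IsClosed {x : Fin n → ℝ | ∀ i, 0 ≤ x i} := by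
    have : {x : Fin n → ℝ | ∀ i, 0 ≤ x i} = ⋂ i, {x | 0 ≤ x i} := by ext; simp
    rw [this]
    exact isClosed_iInter fun i => isClosed_le continuous_const (continuous_apply i)
  have h2 : IsClosed {x : Fin n → ℝ | ∑ i, x i ≤ 1} :=
    isClosed_le (continuous_finset_sum _ fun i _ => continuous_apply i) continuous_const
  exact h1.inter h2

lemma sx_subset_Icc (n : ℕ) : sx n ⊆ Set.Icc (0 : Fin n → ℝ) 1 := by
  rintro x ⟨hx0, hx1⟩
  refine ⟨fun i => hx0 i, fun i => ?_⟩
  calc x i ≤ ∑ j, x j := Finset.single_le_sum (fun j _ => hx0 j) (Finset.mem_univ i)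
  _ ≤ 1 := hx1

lemma sx_isCompact (n : ℕ) : IsCompact (sx n) :=
  (isCompact_Icc).of_isClosed_subset (sx_isClosed n) (sx_subset_Icc n)

lemma sx_measurableSet (n : ℕ) : MeasurableSet (sx n) := (sx_isClosed n).measurableSet

/-- The key Fubini step: integrating over the `(n+1)`-simplex by splitting off coordinate 0. -/
lemma sx_fubini_step (n : ℕ) (f : ℝ → ℝ → ℝ)
    (hf : Continuous fun p : ℝ × ℝ => f p.1 p.2) :
    ∫ x in sx (n+1), f (x 0) (1 - ∑ i, x i) =
      ∫ y in sx n, ∫ t in (0:ℝ)..(1 - ∑ i, y i), f t (1 - ∑ i, y i - t) := by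
  classical
  set T : Set (ℝ × (Fin n → ℝ)) :=
    {p | (0 ≤ p.1 ∧ ∀ i, 0 ≤ p.2 i) ∧ p.1 + ∑ i, p.2 i ≤ 1} with hT
  have hTclosed : IsClosed T := by
    have h1 : IsClosed {p : ℝ × (Fin n → ℝ) | 0 ≤ p.1} :=
      isClosed_le continuous_const continuous_fst
    have h2 : IsClosed {p : ℝ × (Fin n → ℝ) | ∀ i, 0 ≤ p.2 i} := by
      have : {p : ℝ × (Fin n → ℝ) | ∀ i, 0 ≤ p.2 i} = ⋂ i, {p | 0 ≤ p.2 i} := by ext; simp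
      rw [this]
      exact isClosed_iInter fun i =>
        isClosed_le continuous_const ((continuous_apply i).comp continuous_snd)
    have h3 : IsClosed {p : ℝ × (Fin n → ℝ) | p.1 + ∑ i, p.2 i ≤ 1} := by
      refine isClosed_le ?_ continuous_const
      exact continuous_fst.add (continuous_finset_sum _ fun i _ => (continuous_apply i).comp continuous_snd)
    exact (h1.inter h2).inter h3
  have hTsub : T ⊆ (Set.Icc (0:ℝ) 1) ×ˢ (Set.Icc (0 : Fin n → ℝ) 1) := by
    rintro ⟨t, y⟩ ⟨⟨ht, hy⟩, hs⟩
    have hys : 0 ≤ ∑ i, y i := Finset.sum_nonneg fun i _ => hy i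
    refine ⟨⟨ht, by linarith⟩, ?_⟩
    refine sx_subset_Icc n ⟨hy, by linarith⟩
  have hTcompact : IsCompact T :=
    ((isCompact_Icc).prod isCompact_Icc).of_isClosed_subset hTclosed hTsub
  have hTmeas : MeasurableSet T := hTclosed.measurableSet
  -- the function on the product space
  set G : ℝ × (Fin n → ℝ) → ℝ :=
    T.indicator (fun p => f p.1 (1 - p.1 - ∑ i, p.2 i)) with hG
  have hGint : Integrable G (volume : Measure (ℝ × (Fin n → ℝ))) := by
    rw [hG, integrable_indicator_iff hTmeas]
    exact ContinuousOn.integrableOn_compact hTcompact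
      ((hf.comp (continuous_fst.prodMk
        ((continuous_const.sub continuous_fst).sub
          (continuous_finset_sum _ fun i _ => (continuous_apply i).comp continuous_snd)))).continuousOn)
  -- transfer from the simplex integral to the product space
  have e := MeasurableEquiv.piFinSuccAbove (fun _ : Fin (n+1) => ℝ) 0
  have hmp := (volume_preserving_piFinSuccAbove (fun _ : Fin (n+1) => ℝ) 0).symm
  have hsymm : ∀ p : ℝ × (Fin n → ℝ),
      (MeasurableEquiv.piFinSuccAbove (fun _ : Fin (n+1) => ℝ) 0).symm p = Fin.cons p.1 p.2 := by
    rintro ⟨t, y⟩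
    funext i
    rw [MeasurableEquiv.piFinSuccAbove_symm_apply]
    induction i using Fin.cases with
    | zero => simp [Fin.insertNth_apply_same]
    | succ j => simp [Fin.succAbove_zero]
  have key : ∀ p : ℝ × (Fin n → ℝ),
      (sx (n+1)).indicator (fun x => f (x 0) (1 - ∑ i, x i))
        ((MeasurableEquiv.piFinSuccAbove (fun _ : Fin (n+1) => ℝ) 0).symm p) = G p := by
    rintro ⟨t, y⟩
    rw [hsymm]
    have hmem : Fin.cons t y ∈ sx (n+1) ↔ (t, y) ∈ T := by
      simp only [sx, Set.mem_setOf_eq, hT, Fin.sum_cons, Fin.forall_fin_succ, Fin.cons_zero,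
        Fin.cons_succ]
    by_cases hp : (t, y) ∈ T
    · rw [Set.indicator_of_mem (hmem.2 hp), hG, Set.indicator_of_mem hp]
      simp only [Fin.cons_zero, Fin.sum_cons]
      rw [sub_sub]
    · rw [Set.indicator_of_notMem (fun h => hp (hmem.1 h)), hG, Set.indicator_of_notMem hp]
  have step1 : ∫ x in sx (n+1), f (x 0) (1 - ∑ i, x i) = ∫ p, G p := by
    rw [← integral_indicator (sx_measurableSet (n+1))]
    rw [← hmp.integral_comp'
      (g := (sx (n+1)).indicator (fun x => f (x 0) (1 - ∑ i, x i)))]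
    exact integral_congr_ae (Filter.Eventually.of_forall key)
  rw [step1]
  -- Fubini
  rw [show (volume : Measure (ℝ × (Fin n → ℝ))) = (volume : Measure ℝ).prod volume from rfl]
  rw [MeasureTheory.integral_prod_symm G (by exact hGint)]
  -- identify the inner integral
  rw [← integral_indicator (sx_measurableSet n)]
  refine integral_congr_ae (Filter.Eventually.of_forall fun y => ?_)
  by_cases hy : y ∈ sx n
  · obtain ⟨hy0, hy1⟩ := hy
    rw [Set.indicator_of_mem (show y ∈ sx n from ⟨hy0, hy1⟩)]
    have hc : (0:ℝ) ≤ 1 - ∑ i, y i := by linarith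
    have hGy : ∀ t, G (t, y) =
        (Set.Icc (0:ℝ) (1 - ∑ i, y i)).indicator (fun t => f t (1 - ∑ i, y i - t)) t := by
      intro t
      rw [hG]
      by_cases ht : t ∈ Set.Icc (0:ℝ) (1 - ∑ i, y i)
      · obtain ⟨ht0, ht1⟩ := ht
        rw [Set.indicator_of_mem (show (t, y) ∈ T from ⟨⟨ht0, hy0⟩, by linarith⟩),
          Set.indicator_of_mem (Set.mem_Icc.2 ⟨ht0, ht1⟩)]
        rw [sub_right_comm]
      · rw [Set.indicator_of_notMem ht, Set.indicator_of_notMem]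
        rintro ⟨⟨ht0, -⟩, hts⟩
        exact ht (Set.mem_Icc.2 ⟨ht0, by linarith⟩)
    simp_rw [hGy]
    rw [integral_indicator measurableSet_Icc, MeasureTheory.integral_Icc_eq_integral_Ioc,
      ← intervalIntegral.integral_of_le hc]
  · rw [Set.indicator_of_notMem hy]
    have : ∀ t, G (t, y) = 0 := by
      intro t
      rw [hG, Set.indicator_of_notMem]
      rintro ⟨⟨ht0, hy0⟩, hts⟩
      have hys : 0 ≤ ∑ i, y i := Finset.sum_nonneg fun i _ => hy0 i
      exact hy ⟨hy0, by linarith⟩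
    simp [this]

lemma sx_integral_pow (n k : ℕ) :
    ∫ x in sx n, (1 - ∑ i, x i) ^ k = (Nat.factorial k : ℝ) / (Nat.factorial (n + k)) := by
  induction n generalizing k with
  | zero =>
    have hsx : sx 0 = Set.univ := by
      ext x
      simp [sx, Finset.univ_eq_empty]
    rw [hsx, Measure.restrict_univ]
    have huniv : (volume : Measure (Fin 0 → ℝ)) Set.univ = 1 := by
      simp [volume_pi, Measure.pi_univ]
    simp only [Finset.univ_eq_empty, Finset.sum_empty, sub_zero, one_pow, integral_const,
      measureReal_def, huniv, ENNReal.toReal_one, smul_eq_mul, mul_one, Nat.zero_add]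
    rw [eq_comm, div_eq_one_iff_eq (Nat.cast_ne_zero.2 (Nat.factorial_ne_zero k))]
  | succ n ih =>
    have h := sx_fubini_step n (fun _ c => c ^ k)
      (by exact (continuous_snd.pow k))
    rw [show (∫ x in sx (n+1), (1 - ∑ i, x i) ^ k)
        = ∫ x in sx (n+1), (fun _ c => c ^ k) (x 0) (1 - ∑ i, x i) from rfl, h]
    have inner : ∀ y : Fin n → ℝ,
        (∫ t in (0:ℝ)..(1 - ∑ i, y i), (1 - ∑ i, y i - t) ^ k)
          = (1 - ∑ i, y i) ^ (k+1) / (k+1) := by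
      intro y
      set c : ℝ := 1 - ∑ i, y i
      rw [intervalIntegral.integral_comp_sub_left (fun t => t ^ k) c, sub_self, sub_zero,
        integral_pow]
      simp
    simp_rw [inner]
    rw [integral_div, ih (k+1)]
    rw [Nat.factorial_succ]
    have h1 : (0:ℝ) < (k:ℝ) + 1 := by positivity
    have h2 : (Nat.factorial (n + (k+1)) : ℝ) ≠ 0 := Nat.cast_ne_zero.2 (Nat.factorial_ne_zero _)
    have h3 : n + (k + 1) = n + 1 + k := by omega
    rw [h3]
    push_cast
    field_simp

lemma sx_integral_sq_zero (n : ℕ) :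
    ∫ x in sx (n+1), (x 0) ^ 2 = 2 / (Nat.factorial (n + 3)) := by
  have h := sx_fubini_step n (fun t _ => t ^ 2) (by exact (continuous_fst.pow 2))
  rw [show (∫ x in sx (n+1), (x 0) ^ 2)
      = ∫ x in sx (n+1), (fun t _ => t ^ 2) (x 0) (1 - ∑ i, x i) from rfl, h]
  have inner : ∀ y : Fin n → ℝ,
      (∫ t in (0:ℝ)..(1 - ∑ i, y i), t ^ 2) = (1 - ∑ i, y i) ^ 3 / 3 := by
    intro y
    rw [integral_pow]
    norm_num
  simp_rw [inner]
  rw [integral_div, sx_integral_pow n 3]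
  have h3 : n + 3 = n + 3 := rfl
  have : (Nat.factorial 3 : ℝ) = 6 := by norm_num [Nat.factorial]
  rw [this]
  ring

lemma sx_integral_sq (n : ℕ) (i : Fin (n+1)) :
    ∫ x in sx (n+1), (x i) ^ 2 = 2 / (Nat.factorial (n + 3)) := by
  classical
  rw [← sx_integral_sq_zero n]
  -- permutation invariance
  set e : Fin (n+1) ≃ Fin (n+1) := Equiv.swap 0 i with he
  have hmp := volume_measurePreserving_piCongrLeft (fun _ : Fin (n+1) => ℝ) e
  have happ : ∀ (x : Fin (n+1) → ℝ) (j : Fin (n+1)),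
      (MeasurableEquiv.piCongrLeft (fun _ : Fin (n+1) => ℝ) e) x j = x (e.symm j) := by
    intro x j
    rw [MeasurableEquiv.coe_piCongrLeft, Equiv.piCongrLeft_apply_eq_cast]
    rfl
  have hsx : ∀ x : Fin (n+1) → ℝ,
      (MeasurableEquiv.piCongrLeft (fun _ : Fin (n+1) => ℝ) e) x ∈ sx (n+1) ↔ x ∈ sx (n+1) := by
    intro x
    constructor
    · rintro ⟨h0, h1⟩
      refine ⟨fun j => ?_, ?_⟩
      · have := h0 (e j); rwa [happ, Equiv.symm_apply_apply] at this
      · have : ∑ j, (MeasurableEquiv.piCongrLeft (fun _ : Fin (n+1) => ℝ) e) x j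
            = ∑ j, x j := by
          simp_rw [happ]
          exact Equiv.sum_comp e.symm x
        rwa [this] at h1
    · rintro ⟨h0, h1⟩
      refine ⟨fun j => ?_, ?_⟩
      · rw [happ]; exact h0 _
      · have : ∑ j, (MeasurableEquiv.piCongrLeft (fun _ : Fin (n+1) => ℝ) e) x j
            = ∑ j, x j := by
          simp_rw [happ]
          exact Equiv.sum_comp e.symm x
        rwa [this]
  have key := hmp.integral_comp'
    (g := (sx (n+1)).indicator (fun x => (x i) ^ 2))
  have hfun : ∀ x : Fin (n+1) → ℝ,
      (sx (n+1)).indicator (fun z => z i ^ 2)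
          ((MeasurableEquiv.piCongrLeft (fun _ : Fin (n+1) => ℝ) e) x)
        = (sx (n+1)).indicator (fun z => z 0 ^ 2) x := by
    intro x
    by_cases hx : x ∈ sx (n+1)
    · rw [Set.indicator_of_mem hx, Set.indicator_of_mem ((hsx x).2 hx), happ]
      rw [he, Equiv.symm_swap, Equiv.swap_apply_right]
    · rw [Set.indicator_of_notMem hx, Set.indicator_of_notMem (fun h => hx ((hsx x).1 h))]
  rw [← integral_indicator (sx_measurableSet (n+1)),
    ← integral_indicator (sx_measurableSet (n+1)), ← key]
  exact integral_congr_ae (Filter.Eventually.of_forall hfun)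

lemma sx_volume (n : ℕ) :
    ((volume : Measure (Fin n → ℝ)) (sx n)).toReal = 1 / (Nat.factorial n) := by
  have h := sx_integral_pow n 0
  simp only [pow_zero, Nat.add_zero, Nat.factorial_zero, Nat.cast_one] at h
  rw [setIntegral_const] at h
  simpa [measureReal_def] using h

lemma sum_expand (m : ℕ) (φ : ℝ) (w : Fin (m+2) → ℝ) (hw : ∑ i, w i = 1) :
    ∑ i, (φ * w i + (1 - φ) / (m+2 : ℝ)) * ((m+2 : ℝ) * w i - 1)
      = φ * (m+2 : ℝ) * ∑ i, (w i)^2 - φ := by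
  have hM : (m+2 : ℝ) ≠ 0 := by positivity
  have h1 : ∀ i, (φ * w i + (1 - φ) / (m+2 : ℝ)) * ((m+2 : ℝ) * w i - 1)
      = φ * (m+2 : ℝ) * (w i)^2 + ((1 - φ) - φ) * w i - (1 - φ) / (m+2 : ℝ) := by
    intro i
    field_simp
    ring
  rw [Finset.sum_congr rfl (fun i _ => h1 i)]
  rw [Finset.sum_sub_distrib, Finset.sum_add_distrib, ← Finset.mul_sum, ← Finset.mul_sum, hw,
    Finset.sum_const, Finset.card_univ, Fintype.card_fin]
  rw [nsmul_eq_mul]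
  push_cast
  field_simp
  ring

/-- The Dirichlet(1,...,1) distribution on `Fin M → ℝ`, i.e. the uniform probability
distribution on the standard `(M-1)`-dimensional simplex, obtained as the pushforward of the
normalized Lebesgue measure on `{x : Fin (M-1) → ℝ | x ≥ 0, ∑ x ≤ 1}` under the map
appending the last coordinate `1 - ∑ x`. -/
noncomputable def stdSimplexUniform (M : ℕ) : Measure (Fin M → ℝ) :=
  Measure.map
    (fun (x : Fin (M - 1) → ℝ) (i : Fin M) =>
      if h : (i : ℕ) < M - 1 then x ⟨i, h⟩ else 1 - ∑ j, x j)
    ((Nat.factorial (M - 1) : ℝ≥0∞) •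
      volume.restrict {x : Fin (M - 1) → ℝ | (∀ i, 0 ≤ x i) ∧ ∑ i, x i ≤ 1})

/-- With `(w_1,...,w_M) ~ Dirichlet(1,...,1)` and `W̃` sampled (conditionally on the `w_i`)
taking value `w_i` with probability `φ w_i + (1-φ)/M`, the unconditional expectation of
Google's estimator `U = M W̃ - 1` equals `φ (M-1)/(M+1)`. -/
theorem google_estimator_unconditional_mean (M : ℕ) (hM : 2 ≤ M) (φ : ℝ)
    (hφ : φ ∈ Set.Icc (0 : ℝ) 1) :
    ∫ w, (∑ i, (φ * w i + (1 - φ) / M) * ((M : ℝ) * w i - 1)) ∂(stdSimplexUniform M)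
      = φ * ((M : ℝ) - 1) / ((M : ℝ) + 1) := by
  obtain ⟨m, rfl⟩ : ∃ m, M = m + 2 := ⟨M - 2, by omega⟩
  set p : (Fin (m+1) → ℝ) → (Fin (m+2) → ℝ) :=
    fun x i => if h : (i : ℕ) < m + 1 then x ⟨i, h⟩ else 1 - ∑ j, x j with hp
  have hmap : stdSimplexUniform (m+2)
      = Measure.map p ((Nat.factorial (m+1) : ℝ≥0∞) • volume.restrict (sx (m+1))) := rfl
  rw [hmap]
  have hpmeas : Measurable p := by
    refine measurable_pi_lambda _ fun i => ?_
    by_cases h : (i : ℕ) < m + 1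
    · simpa [hp, h, Nat.lt_succ_iff.mp h] using measurable_pi_apply (X := fun _ => ℝ) (⟨(i : ℕ), h⟩ : Fin (m+1))
    · simp only [hp, h, dite_false]
      exact measurable_const.sub (Finset.univ.measurable_sum fun j _ => measurable_pi_apply j)
  have hcont : Continuous fun w : Fin (m+2) → ℝ =>
      ∑ i, (φ * w i + (1 - φ) / ((m+2 : ℕ) : ℝ)) * (((m+2 : ℕ) : ℝ) * w i - 1) := by
    refine continuous_finset_sum _ fun i _ => ?_
    exact ((continuous_const.mul (continuous_apply i)).add continuous_const).mul
      ((continuous_const.mul (continuous_apply i)).sub continuous_const)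
  rw [integral_map hpmeas.aemeasurable hcont.aestronglyMeasurable, integral_smul_measure]
  -- pointwise simplification of the integrand
  have hpsum : ∀ x : Fin (m+1) → ℝ, ∑ i, p x i = 1 := by
    intro x
    rw [Fin.sum_univ_castSucc]
    have h1 : ∀ j : Fin (m+1), p x (Fin.castSucc j) = x j := by
      intro j
      simp only [hp]
      rw [dif_pos (by simpa using j.isLt)]
      exact congrArg x (Fin.ext (by simp))
    have h2 : p x (Fin.last (m+1)) = 1 - ∑ j, x j := by
      simp only [hp]
      rw [dif_neg (by simp)]
    simp_rw [h1, h2]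
    ring
  have hpsq : ∀ x : Fin (m+1) → ℝ,
      ∑ i, (p x i)^2 = (∑ j, (x j)^2) + (1 - ∑ j, x j)^2 := by
    intro x
    rw [Fin.sum_univ_castSucc]
    have h1 : ∀ j : Fin (m+1), p x (Fin.castSucc j) = x j := by
      intro j
      simp only [hp]
      rw [dif_pos (by simpa using j.isLt)]
      exact congrArg x (Fin.ext (by simp))
    have h2 : p x (Fin.last (m+1)) = 1 - ∑ j, x j := by
      simp only [hp]
      rw [dif_neg (by simp)]
    simp_rw [h1, h2]
  have hpt : ∀ x : Fin (m+1) → ℝ,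
      ∑ i, (φ * p x i + (1 - φ) / ((m+2 : ℕ) : ℝ)) * (((m+2 : ℕ) : ℝ) * p x i - 1)
        = φ * (m+2 : ℝ) * ((∑ j, (x j)^2) + (1 - ∑ j, x j)^2) - φ := by
    intro x
    have := sum_expand m φ (p x) (hpsum x)
    push_cast at this ⊢
    rw [this, hpsq]
  rw [integral_congr_ae (Filter.Eventually.of_forall fun x => hpt x)]
  -- integrability facts
  have hintsum : IntegrableOn (fun x : Fin (m+1) → ℝ => ∑ j, (x j)^2) (sx (m+1)) volume := by
    refine ContinuousOn.integrableOn_compact (sx_isCompact (m+1)) ?_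
    exact (continuous_finset_sum _ fun j _ => (continuous_apply j).pow 2).continuousOn
  have hintlast : IntegrableOn (fun x : Fin (m+1) → ℝ => (1 - ∑ j, x j)^2) (sx (m+1)) volume := by
    refine ContinuousOn.integrableOn_compact (sx_isCompact (m+1)) ?_
    exact ((continuous_const.sub (continuous_finset_sum _ fun j _ =>
      continuous_apply j)).pow 2).continuousOn
  have hintQ : IntegrableOn
      (fun x : Fin (m+1) → ℝ => (∑ j, (x j)^2) + (1 - ∑ j, x j)^2) (sx (m+1)) volume :=
    hintsum.add hintlast
  -- compute the integral
  have hsplit : ∫ x in sx (m+1),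
      (φ * (m+2 : ℝ) * ((∑ j, (x j)^2) + (1 - ∑ j, x j)^2) - φ)
      = φ * (m+2 : ℝ) * ((∑ j : Fin (m+1), ∫ x in sx (m+1), (x j)^2)
          + ∫ x in sx (m+1), (1 - ∑ j, x j)^2)
        - φ * (1 / (Nat.factorial (m+1))) := by
    rw [integral_sub (hintQ.const_mul _) (integrableOn_const
      ((sx_isCompact (m+1)).measure_lt_top.ne))]
    rw [integral_const_mul, integral_add hintsum hintlast, setIntegral_const]
    rw [integral_finset_sum _ (fun j _ => by
      exact ContinuousOn.integrableOn_compact (sx_isCompact (m+1))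
        ((continuous_apply j).pow 2).continuousOn)]
    rw [measureReal_def, sx_volume (m+1), smul_eq_mul]
    ring
  rw [hsplit]
  have hsq : ∀ j : Fin (m+1), ∫ x in sx (m+1), (x j)^2 = 2 / (Nat.factorial (m+3)) :=
    fun j => sx_integral_sq m j
  simp_rw [hsq]
  rw [Finset.sum_const, Finset.card_univ, Fintype.card_fin]
  have hlast := sx_integral_pow (m+1) 2
  norm_num [Nat.factorial] at hlast
  rw [hlast]
  -- final arithmetic
  have e1 : ((Nat.factorial (m+3) : ℕ) : ℝ)
      = ((m:ℝ)+3) * (((m:ℝ)+2) * (((m:ℝ)+1) * (Nat.factorial m : ℝ))) := by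
    rw [show m+3 = (m+2)+1 from rfl, Nat.factorial_succ, show m+2 = (m+1)+1 from rfl,
      Nat.factorial_succ, Nat.factorial_succ]
    push_cast
    ring
  have e2 : ((Nat.factorial (m+1) : ℕ) : ℝ) = ((m:ℝ)+1) * (Nat.factorial m : ℝ) := by
    rw [Nat.factorial_succ]
    push_cast
    ring
  have hm3 : ((m:ℝ)+3) ≠ 0 := by positivity
  have hm2 : ((m:ℝ)+2) ≠ 0 := by positivity
  have hm1 : ((m:ℝ)+1) ≠ 0 := by positivity
  have hmf : (Nat.factorial m : ℝ) ≠ 0 := Nat.cast_ne_zero.2 (Nat.factorial_ne_zero _)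
  have hm3' : ((m:ℝ)+2+1) ≠ 0 := by positivity
  have hm2' : ((m:ℝ)+1+1) ≠ 0 := by positivity
  rw [ENNReal.toReal_natCast, e1, e2]
  rw [nsmul_eq_mul, smul_eq_mul]
  push_cast
  field_simp
  ring
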